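/- Let ω ∈ Ω with γ_{(1,1)}^ω = ((0,0),(1,0),(1,1)), and let ε : ℤ² → [0,∞) vanish off the vertical axis, i.e. ε(x,y) = 0 whenever x > 0. If ω(1,0) > ω(0,1) + ε(0,1), then for every z ∈ V(T_{(1,1)}^{ω+ε}) one has γ_z^{ω+ε} = γ_z^ω; in particular V(T_{(1,1)}^{ω+ε}) ⊆ V(T_{(1,1)}^ω). -/

import Mathlib

open scoped NNReal

/-- A site of the lattice `ℤ²`. -/
abbrev Site : Type := ℤ × ℤ

/-- The positive quadrant `ℤ₊²`. -/
def posQuad : Set Site := {z : Site | 0 ≤ z.1 ∧ 0 ≤ z.2}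

/-- An admissible (up-right) step. -/
def IsStep (u v : Site) : Prop := v = u + (1, 0) ∨ v = u + (0, 1)

/-- `γ` is an up-right path from `(0,0)` to `z`, i.e. `γ ∈ Γ_z`. -/
def IsPathTo (z : Site) (γ : List Site) : Prop :=
  γ.head? = some ((0, 0) : Site) ∧ γ.getLast? = some z ∧ γ.Chain' IsStep

/-- The length `ω(γ) = Σ_{z ∈ γ} ω(z)` of a path `γ` under the configuration `ω`. -/
noncomputable def plen (ω : Site → ℝ) (γ : List Site) : ℝ := (γ.map ω).sum

/-- `γ ∈ Γ_z` is `ω`-optimal if its length is maximal over `Γ_z`. -/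
def IsOptimal (ω : Site → ℝ) (z : Site) (γ : List Site) : Prop :=
  IsPathTo z γ ∧ ∀ γ' : List Site, IsPathTo z γ' → plen ω γ' ≤ plen ω γ

/-- `γ` is below `γ'`: at every step index, the second coordinate of the site of `γ`
is at most that of the corresponding site of `γ'`. -/
def Below (γ γ' : List Site) : Prop :=
  ∀ (i : ℕ) (h : i < γ.length) (h' : i < γ'.length),
    (γ.get ⟨i, h⟩).2 ≤ (γ'.get ⟨i, h'⟩).2

/-- `γ` is the low-optimal path of `Γ_z`: it is `ω`-optimal and below every
`ω`-optimal path of `Γ_z`. -/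
def IsLowOptimal (ω : Site → ℝ) (z : Site) (γ : List Site) : Prop :=
  IsOptimal ω z γ ∧ ∀ γ' : List Site, IsOptimal ω z γ' → Below γ γ'

open Classical in
/-- The low-optimal path `γ_z^ω` (an arbitrary default when it does not exist). -/
noncomputable def lowOpt (ω : Site → ℝ) (z : Site) : List Site :=
  if h : ∃ γ : List Site, IsLowOptimal ω z γ then h.choose else []

/-- The vertex set `V(T_z^ω) = {z' ∈ ℤ₊² : z ∈ γ_{z'}^ω}` of the subtree rooted at `z`. -/
def treeV (ω : Site → ℝ) (z : Site) : Set Site :=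
  {z' : Site | z' ∈ posQuad ∧ z ∈ lowOpt ω z'}

/- ### Auxiliary lemmas -/

lemma IsStep.sum {u v : Site} (h : IsStep u v) : v.1 + v.2 = u.1 + u.2 + 1 := by
  rcases h with rfl | rfl <;> simp <;> ring

lemma IsStep.fst_le {u v : Site} (h : IsStep u v) : u.1 ≤ v.1 := by
  rcases h with rfl | rfl <;> simp

lemma step_get {γ : List Site} (hc : γ.Chain' IsStep) {i : ℕ} (h : i + 1 < γ.length) :
    IsStep (γ.get ⟨i, by omega⟩) (γ.get ⟨i + 1, h⟩) :=
  List.isChain_iff_getElem.mp hc i h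

lemma sum_coord {γ : List Site} (hh : γ.head? = some ((0, 0) : Site))
    (hc : γ.Chain' IsStep) :
    ∀ i (h : i < γ.length), (γ.get ⟨i, h⟩).1 + (γ.get ⟨i, h⟩).2 = i := by
  intro i
  induction i with
  | zero =>
      intro h
      obtain ⟨t, rfl⟩ : ∃ t, γ = ((0, 0) : Site) :: t := by
        cases γ with
        | nil => simp at hh
        | cons a t => simp only [List.head?_cons, Option.some.injEq] at hh; exact ⟨t, by rw [hh]⟩
      simp
  | succ i ih =>
      intro h
      have hs := (step_get hc h).sum
      have h2 := ih (by omega)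
      push_cast
      push_cast at h2
      linarith

lemma mono_fst {γ : List Site} (hc : γ.Chain' IsStep) :
    ∀ i j (hij : i ≤ j) (hj : j < γ.length),
      (γ.get ⟨i, by omega⟩).1 ≤ (γ.get ⟨j, hj⟩).1 := by
  intro i j
  induction j with
  | zero =>
      intro hij hj
      have : i = 0 := Nat.le_zero.mp hij
      subst this; exact le_refl _
  | succ j ih =>
      intro hij hj
      rcases Nat.eq_or_lt_of_le hij with rfl | hlt
      · exact le_refl _
      · exact le_trans (ih (by omega) (by omega)) (step_get hc hj).fst_le

lemma path_length {z : Site} {γ : List Site} (hp : IsPathTo z γ) :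
    (γ.length : ℤ) = z.1 + z.2 + 1 := by
  obtain ⟨hh, hl, hc⟩ := hp
  have hne : γ ≠ [] := by rintro rfl; simp at hh
  have hlen : 0 < γ.length := List.length_pos_iff.mpr hne
  have hget : γ.get ⟨γ.length - 1, by omega⟩ = z := by
    rw [List.get_eq_getElem, ← List.getLast_eq_getElem hne]
    rw [List.getLast?_eq_getLast hne] at hl
    exact Option.some.injEq _ _ ▸ (by simpa using hl)
  have hs := sum_coord hh hc (γ.length - 1) (by omega)
  rw [hget] at hs
  omega

lemma path_ext {z : Site} {γ₁ γ₂ : List Site} (h1 : IsPathTo z γ₁) (h2 : IsPathTo z γ₂)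
    (hy : ∀ i (hi1 : i < γ₁.length) (hi2 : i < γ₂.length),
      (γ₁.get ⟨i, hi1⟩).2 = (γ₂.get ⟨i, hi2⟩).2) : γ₁ = γ₂ := by
  have hl1 := path_length h1
  have hl2 := path_length h2
  have hlen : γ₁.length = γ₂.length := by omega
  apply List.ext_get hlen
  intro i hi1 hi2
  have hs1 := sum_coord h1.1 h1.2.2 i hi1
  have hs2 := sum_coord h2.1 h2.2.2 i hi2
  have hyy := hy i hi1 hi2
  have : (γ₁.get ⟨i, hi1⟩).1 = (γ₂.get ⟨i, hi2⟩).1 := by omega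
  exact Prod.ext this hyy

lemma lowOptimal_unique {ω : Site → ℝ} {z : Site} {γ₁ γ₂ : List Site}
    (h1 : IsLowOptimal ω z γ₁) (h2 : IsLowOptimal ω z γ₂) : γ₁ = γ₂ := by
  apply path_ext h1.1.1 h2.1.1
  intro i hi1 hi2
  exact le_antisymm (h1.2 γ₂ h2.1 i hi1 hi2) (h2.2 γ₁ h1.1 i hi2 hi1)

lemma lowOpt_eq {ω : Site → ℝ} {z : Site} {γ : List Site} (h : IsLowOptimal ω z γ) :
    lowOpt ω z = γ := by
  have hex : ∃ γ' : List Site, IsLowOptimal ω z γ' := ⟨γ, h⟩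
  rw [lowOpt, dif_pos hex]
  exact lowOptimal_unique hex.choose_spec h

lemma plen_cons (ω : Site → ℝ) (a : Site) (l : List Site) :
    plen ω (a :: l) = ω a + plen ω l := by simp [plen]

lemma plen_add (ω ε : Site → ℝ) (γ : List Site) :
    plen (fun s => ω s + ε s) γ = plen ω γ + plen ε γ := by
  induction γ with
  | nil => simp [plen]
  | cons a l ih => simp only [plen_cons, ih]; ring

lemma eps_le_plen {ε : Site → ℝ} (hε : ∀ z : Site, 0 ≤ ε z) {z : Site} {γ : List Site}
    (hp : IsPathTo z γ) : ε (0, 0) ≤ plen ε γ := by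
  have hmem : ((0, 0) : Site) ∈ γ := List.mem_of_mem_head? (by rw [hp.1]; simp)
  exact List.single_le_sum (by intro x hx; obtain ⟨a, _, rfl⟩ := List.mem_map.mp hx; exact hε a)
    (ε (0, 0)) (List.mem_map.mpr ⟨(0, 0), hmem, rfl⟩)

/-- Step I of the proof of Theorem 3: if `ε` vanishes off the vertical axis and
`ω(1,0) > ω(0,1) + ε(0,1)`, then low-optimal paths to vertices of
`T_{(1,1)}^{ω+ε}` are unchanged; in particular `V(T_{(1,1)}^{ω+ε}) ⊆ V(T_{(1,1)}^ω)`. -/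
theorem tree_shrinks_axis (ω ε : Site → ℝ) (hω : ∀ z : Site, 0 ≤ ω z)
    (hε : ∀ z : Site, 0 ≤ ε z)
    (hω1 : lowOpt ω (1, 1) = [((0, 0) : Site), (1, 0), (1, 1)])
    (hvan : ∀ z : Site, 0 < z.1 → ε z = 0)
    (h : ω (0, 1) + ε (0, 1) < ω (1, 0)) :
    (∀ z ∈ treeV (fun s => ω s + ε s) (1, 1),
      lowOpt (fun s => ω s + ε s) z = lowOpt ω z) ∧
    treeV (fun s => ω s + ε s) (1, 1) ⊆ treeV ω (1, 1) := by
  set ω' : Site → ℝ := fun s => ω s + ε s with hω'def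
  have key : ∀ z ∈ treeV ω' (1, 1), lowOpt ω' z = lowOpt ω z := by
    rintro z ⟨hzq, hmem⟩
    by_cases hex : ∃ γ : List Site, IsLowOptimal ω' z γ
    case neg => rw [lowOpt, dif_neg hex] at hmem; simp at hmem
    have hloγ : IsLowOptimal ω' z (lowOpt ω' z) := by
      rw [lowOpt, dif_pos hex]; exact hex.choose_spec
    obtain ⟨γ, hγdef⟩ : ∃ γ, lowOpt ω' z = γ := ⟨_, rfl⟩
    rw [hγdef] at hmem hloγ ⊢
    obtain ⟨⟨hpγ, hoptγ⟩, hbelγ⟩ := hloγ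
    obtain ⟨hh, hl, hc⟩ := hpγ
    -- γ contains (1,1) at index 2
    obtain ⟨⟨k, hk⟩, hget11⟩ := List.mem_iff_get.mp hmem
    have hsumk := sum_coord hh hc k hk
    rw [hget11] at hsumk
    have hk2 : k = 2 := by simp at hsumk; omega
    subst hk2
    -- destructure γ = a :: b :: c :: t
    obtain ⟨a, b, c, t, rfl⟩ : ∃ a b c t, γ = a :: b :: c :: t := by
      match γ, hk with
      | a :: b :: c :: t, _ => exact ⟨a, b, c, t, rfl⟩
    have ha : a = ((0, 0) : Site) := by simpa using hh
    subst ha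
    have hcval : c = ((1, 1) : Site) := hget11
    subst hcval
    have hstep1 : IsStep ((0, 0) : Site) b := (List.isChain_cons_cons.mp hc).1
    have hchain2 : List.Chain' IsStep (b :: (1, 1) :: t) := (List.isChain_cons_cons.mp hc).2
    have hchain3 : List.Chain' IsStep ((1, 1) :: t) := (List.isChain_cons_cons.mp hchain2).2
    have hb : b = ((1, 0) : Site) ∨ b = ((0, 1) : Site) := by
      rcases hstep1 with rfl | rfl
      · left; rfl
      · right; rfl
    -- the swapped path for the contradiction case
    have hε10 : ε (1, 0) = 0 := hvan _ (by norm_num)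
    have hε11 : ε (1, 1) = 0 := hvan _ (by norm_num)
    have hb10 : b = ((1, 0) : Site) := by
      rcases hb with rfl | rfl
      · rfl
      · exfalso
        have hstep2' : IsStep ((1, 0) : Site) ((1, 1) : Site) := Or.inr rfl
        have hstep1' : IsStep ((0, 0) : Site) ((1, 0) : Site) := Or.inl rfl
        have hp' : IsPathTo z (((0, 0) : Site) :: (1, 0) :: (1, 1) :: t) := by
          refine ⟨rfl, ?_, ?_⟩
          · rw [List.getLast?_cons_cons, List.getLast?_cons_cons] at hl ⊢
            exact hl
          · exact List.isChain_cons_cons.mpr ⟨hstep1', List.isChain_cons_cons.mpr ⟨hstep2', hchain3⟩⟩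
        have := hoptγ _ hp'
        simp only [plen_cons, hω'def] at this
        rw [hε10] at this
        linarith
    subst hb10
    -- all sites after index 0 have first coordinate ≥ 1
    have htail : ∀ w ∈ ((1, 0) : Site) :: (1, 1) :: t, (0 : ℤ) < w.1 := by
      intro w hw
      obtain ⟨⟨i, hi⟩, rfl⟩ := List.mem_iff_get.mp hw
      have : (((0, 0) : Site) :: (1, 0) :: (1, 1) :: t).get
          ⟨i + 1, by simpa using Nat.succ_lt_succ hi⟩ = (((1, 0) : Site) :: (1, 1) :: t).get ⟨i, hi⟩ := rfl
      rw [← this]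
      have hmono := mono_fst hc 1 (i + 1) (by omega) (by simpa using Nat.succ_lt_succ hi)
      have h1 : ((((0, 0) : Site) :: (1, 0) :: (1, 1) :: t).get ⟨1, by simp⟩).1 = 1 := rfl
      rw [h1] at hmono
      omega
    -- plen ε γ = ε (0,0)
    have hepsγ : plen ε (((0, 0) : Site) :: (1, 0) :: (1, 1) :: t) = ε (0, 0) := by
      rw [plen_cons]
      have : plen ε (((1, 0) : Site) :: (1, 1) :: t) = 0 := by
        apply List.sum_eq_zero
        intro x hx
        obtain ⟨w, hw, rfl⟩ := List.mem_map.mp hx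
        exact hvan w (htail w hw)
      rw [this]; ring
    set γ0 : List Site := ((0, 0) : Site) :: (1, 0) :: (1, 1) :: t with hγ0
    have hpγ0 : IsPathTo z γ0 := ⟨hh, hl, hc⟩
    have hplen : plen ω' γ0 = plen ω γ0 + ε (0, 0) := by
      rw [hω'def, plen_add, hepsγ]
    -- γ0 is ω-optimal
    have hoptω : IsOptimal ω z γ0 := by
      refine ⟨hpγ0, fun γ'' hγ'' => ?_⟩
      have h1 := hoptγ γ'' hγ''
      have h2 := eps_le_plen hε hγ''
      rw [hplen] at h1
      rw [hω'def, plen_add] at h1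
      linarith
    -- every ω-optimal path is ω'-optimal
    have hlow : IsLowOptimal ω z γ0 := by
      refine ⟨hoptω, fun γ'' hγ'' => ?_⟩
      apply hbelγ
      refine ⟨hγ''.1, fun γ''' hγ''' => ?_⟩
      have e1 : plen ω γ'' = plen ω γ0 := le_antisymm (hoptω.2 γ'' hγ''.1) (hγ''.2 γ0 hpγ0)
      have e2 : plen ω' γ0 ≤ plen ω' γ'' := by
        rw [hplen, hω'def, plen_add, e1]
        have := eps_le_plen hε hγ''.1
        linarith
      exact le_trans (hoptγ γ''' hγ''') e2
    rw [lowOpt_eq hlow]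
  refine ⟨key, fun z hz => ?_⟩
  obtain ⟨hzq, hmem⟩ := hz
  exact ⟨hzq, by rw [← key z ⟨hzq, hmem⟩]; exact hmem⟩
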